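/- Let δ ∈ [0,1) and d, w > 0 with d·w > 1-δ. Define A(d,w,δ) = (1-δ)·d^w·(w+1)^(w+1)/(dw - (1-δ))^(w+1). Then the partial derivative of A with respect to d is strictly negative and the partial derivative of A with respect to w is strictly negative. -/

import Mathlib

/-- The critical-fugacity function of the bipartite hardcore model. -/
noncomputable def A (d w δ : ℝ) : ℝ :=
  (1 - δ) * d ^ w * (w + 1) ^ (w + 1) / (d * w - (1 - δ)) ^ (w + 1)

/-- If `dw > 1-δ`, both partial derivatives of `A(d,w,δ)` (in `d` and in `w`)
are strictly negative. -/
theorem stmt4 (δ d w : ℝ) (hδ0 : 0 ≤ δ) (hδ1 : δ < 1) (hd : 0 < d) (hw : 0 < w)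
    (hdw : 1 - δ < d * w) :
    deriv (fun d' => A d' w δ) d < 0 ∧ deriv (fun w' => A d w' δ) w < 0 := by
  set c := 1 - δ with hc_def
  have hc : 0 < c := by simp only [hc_def]; linarith
  have hu : 0 < d * w - c := by linarith
  set u := d * w - c with hu_def
  have hw1 : (0:ℝ) < w + 1 := by linarith
  have hP : (0:ℝ) < (w + 1) ^ (w + 1) := Real.rpow_pos_of_pos hw1 _
  have hU : (0:ℝ) < u ^ (w + 1) := Real.rpow_pos_of_pos hu _
  have hDW : (0:ℝ) < d ^ w := Real.rpow_pos_of_pos hd _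
  have e3 : u ^ w * u = u ^ (w + 1) := (Real.rpow_add_one hu.ne' w).symm
  constructor
  · -- derivative in d
    have hfun : (fun d' => A d' w δ) =
        fun d' : ℝ => c * d' ^ w * (w + 1) ^ (w + 1) / (d' * w - c) ^ (w + 1) := by
      funext x; rw [A, ← hc_def]
    have hN : HasDerivAt (fun x : ℝ => c * x ^ w * (w + 1) ^ (w + 1))
        (c * (w * d ^ (w - 1)) * (w + 1) ^ (w + 1)) d :=
      ((Real.hasDerivAt_rpow_const (Or.inl hd.ne')).const_mul c).mul_const _
    have h0 : HasDerivAt (fun x : ℝ => x * w - c) (1 * w) d :=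
      ((hasDerivAt_id d).mul_const w).sub_const c
    have hD : HasDerivAt (fun x : ℝ => (x * w - c) ^ (w + 1))
        (1 * w * (w + 1) * (d * w - c) ^ (w + 1 - 1)) d := h0.rpow_const (Or.inl hu.ne')
    have hA := hN.div hD (by rw [← hu_def]; exact hU.ne')
    rw [hfun, show (fun d' : ℝ => c * d' ^ w * (w + 1) ^ (w + 1) / (d' * w - c) ^ (w + 1)) =
      ((fun x : ℝ => c * x ^ w * (w + 1) ^ (w + 1)) / fun x : ℝ => (x * w - c) ^ (w + 1)) from rfl,
      hA.deriv]
    apply div_neg_of_neg_of_pos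
    · have e1 : d ^ (w - 1) * d = d ^ w := by
        rw [← Real.rpow_add_one hd.ne']; ring_nf
      have e2 : (d * w - c) ^ (w + 1 - 1) = u ^ w := by
        rw [← hu_def]; norm_num
      have key : c * (w * d ^ (w - 1)) * (w + 1) ^ (w + 1) * (d * w - c) ^ (w + 1)
          - c * d ^ w * (w + 1) ^ (w + 1) * (1 * w * (w + 1) * (d * w - c) ^ (w + 1 - 1))
          = -(c * (w + 1) ^ (w + 1) * w * (d ^ (w - 1) * u ^ w) * (c + d)) := by
        rw [e2, ← hu_def, ← e3, ← e1, hu_def]; ring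
      rw [key]
      have hpos : 0 < c * (w + 1) ^ (w + 1) * w * (d ^ (w - 1) * u ^ w) * (c + d) := by
        have := Real.rpow_pos_of_pos hd (w - 1)
        have := Real.rpow_pos_of_pos hu w
        positivity
      linarith
    · rw [← hu_def]; positivity
  · -- derivative in w
    have hfun : (fun w' => A d w' δ) =
        fun w' : ℝ => c * d ^ w' * (w' + 1) ^ (w' + 1) / (d * w' - c) ^ (w' + 1) := by
      funext x; rw [A, ← hc_def]
    have f1 : HasDerivAt (fun x : ℝ => d ^ x) (d ^ w * Real.log d) w :=
      (Real.hasStrictDerivAt_const_rpow hd w).hasDerivAt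
    have hid1 : HasDerivAt (fun x : ℝ => x + 1) 1 w := (hasDerivAt_id w).add_const 1
    have f2 : HasDerivAt (fun x : ℝ => (x + 1) ^ (x + 1))
        (1 * (w + 1) * (w + 1) ^ (w + 1 - 1) + 1 * (w + 1) ^ (w + 1) * Real.log (w + 1)) w :=
      hid1.rpow hid1 hw1
    have hN : HasDerivAt (fun x : ℝ => c * d ^ x * (x + 1) ^ (x + 1))
        (c * (d ^ w * Real.log d) * (w + 1) ^ (w + 1)
          + c * d ^ w *
            (1 * (w + 1) * (w + 1) ^ (w + 1 - 1) + 1 * (w + 1) ^ (w + 1) * Real.log (w + 1))) w :=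
      (f1.const_mul c).mul f2
    have hlin : HasDerivAt (fun x : ℝ => d * x - c) (d * 1) w :=
      ((hasDerivAt_id w).const_mul d).sub_const c
    have hD : HasDerivAt (fun x : ℝ => (d * x - c) ^ (x + 1))
        (d * 1 * (w + 1) * (d * w - c) ^ (w + 1 - 1)
          + 1 * (d * w - c) ^ (w + 1) * Real.log (d * w - c)) w := hlin.rpow hid1 hu
    have hA := hN.div hD (by rw [← hu_def]; exact hU.ne')
    rw [hfun, show (fun w' : ℝ => c * d ^ w' * (w' + 1) ^ (w' + 1) / (d * w' - c) ^ (w' + 1)) =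
      ((fun x : ℝ => c * d ^ x * (x + 1) ^ (x + 1)) / fun x : ℝ => (d * x - c) ^ (x + 1)) from rfl,
      hA.deriv]
    apply div_neg_of_neg_of_pos
    · set t : ℝ := d * (w + 1) / u with ht_def
      have htu : u < d * (w + 1) := by rw [hu_def]; nlinarith
      have ht1 : 1 < t := (one_lt_div hu).mpr htu
      have hlogt : Real.log t < t - 1 :=
        Real.log_lt_sub_one_of_pos (by positivity) ht1.ne'
      have hlog_split : Real.log t = Real.log d + Real.log (w + 1) - Real.log u := by
        rw [ht_def, Real.log_div (by positivity) hu.ne', Real.log_mul hd.ne' hw1.ne']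
      have eP : (w + 1) * (w + 1) ^ (w + 1 - 1) = (w + 1) ^ (w + 1) := by
        rw [show w + 1 - 1 = w from by ring, mul_comm, ← Real.rpow_add_one hw1.ne' w]
      have eU : (d * w - c) ^ (w + 1 - 1) = u ^ w := by
        rw [← hu_def]; norm_num
      have key : (c * (d ^ w * Real.log d) * (w + 1) ^ (w + 1)
            + c * d ^ w *
              (1 * (w + 1) * (w + 1) ^ (w + 1 - 1) + 1 * (w + 1) ^ (w + 1) * Real.log (w + 1)))
            * (d * w - c) ^ (w + 1)
          - c * d ^ w * (w + 1) ^ (w + 1) *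
            (d * 1 * (w + 1) * (d * w - c) ^ (w + 1 - 1)
              + 1 * (d * w - c) ^ (w + 1) * Real.log (d * w - c))
          = c * d ^ w * (w + 1) ^ (w + 1) * u ^ (w + 1)
              * (Real.log t + 1 - t) := by
        rw [eU, ← hu_def, ← e3, hlog_split, ht_def]
        field_simp
        rw [eP]
        ring
      rw [key]
      have hM : 0 < c * d ^ w * (w + 1) ^ (w + 1) * u ^ (w + 1) := by positivity
      have hB : Real.log t + 1 - t < 0 := by linarith
      exact mul_neg_of_pos_of_neg hM hB
    · rw [← hu_def]; positivity
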